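/- Let e ∈ ℂ and x > 1 real with x(1-|e|²) = e² + |e|² + ē² and |e|² = x²/(9(x-1)). Let β satisfy 2β̄e = (3/(2x))(e² + x|e|²). Then |2β̄e - 1|² = (x-3)²/(18(x-1)). -/

import Mathlib

theorem stmt_6 (e β : ℂ) (x : ℝ) (hx : 1 < x)
    (h1 : (x : ℂ) * (1 - (((‖e‖ : ℝ) : ℂ)) ^ 2)
        = e ^ 2 + (((‖e‖ : ℝ) : ℂ)) ^ 2 + (starRingEnd ℂ e) ^ 2)
    (h2 : ‖e‖ ^ 2 = x ^ 2 / (9 * (x - 1)))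
    (hβ : 2 * (starRingEnd ℂ β) * e
        = (3 / (2 * (x : ℂ))) * (e ^ 2 + (x : ℂ) * (((‖e‖ : ℝ) : ℂ)) ^ 2)) :
    ‖2 * (starRingEnd ℂ β) * e - 1‖ ^ 2 = (x - 3) ^ 2 / (18 * (x - 1)) := by
  have hx0 : (x:ℂ) ≠ 0 := by
    exact_mod_cast (show (x:ℝ) ≠ 0 by linarith)
  have hx1 : (x:ℂ) - 1 ≠ 0 := by
    intro h
    have : (x:ℂ) = 1 := by linear_combination h
    have : x = (1:ℝ) := by exact_mod_cast this
    linarith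
  have hec : e * (starRingEnd ℂ e) = (((‖e‖ : ℝ) : ℂ))^2 := by
    rw [Complex.mul_conj]
    norm_cast
    rw [Complex.sq_norm]
  have h2c : (((‖e‖ : ℝ) : ℂ))^2 = (x:ℂ)^2 / (9*((x:ℂ)-1)) := by
    exact_mod_cast congrArg (Complex.ofReal) h2
  have hconjβ : 2 * β * (starRingEnd ℂ e)
      = (3 / (2 * (x : ℂ))) * ((starRingEnd ℂ e) ^ 2 + (x : ℂ) * (((‖e‖ : ℝ) : ℂ)) ^ 2) := by
    have := congrArg (starRingEnd ℂ) hβ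
    simp only [map_mul, map_add, map_div₀, map_pow, map_ofNat, Complex.conj_ofReal, Complex.conj_conj] at this
    linear_combination this
  have main : (2 * (starRingEnd ℂ β) * e - 1) * (starRingEnd ℂ) (2 * (starRingEnd ℂ β) * e - 1)
      = (((x - 3) ^ 2 / (18 * (x - 1)) : ℝ) : ℂ) := by
    have hcw : (starRingEnd ℂ) (2 * (starRingEnd ℂ β) * e - 1) = 2 * β * (starRingEnd ℂ e) - 1 := by
      simp only [map_sub, map_mul, map_ofNat, map_one, Complex.conj_conj]
    rw [hcw, hβ, hconjβ]
    push_cast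
    have h2' : (((‖e‖ : ℝ) : ℂ))^2 * (9*((x:ℂ)-1)) = (x:ℂ)^2 := by
      rw [h2c]; field_simp
    field_simp
    linear_combination (-(54:ℂ) * ((x:ℂ)-1) * (x:ℂ) * (3 * (((‖e‖ : ℝ) : ℂ))^2 - 2)) * h1
      + 162 * ((x:ℂ)-1) * (e * (starRingEnd ℂ e) + (((‖e‖ : ℝ) : ℂ))^2) * hec
      + (-18 * ((x:ℂ)-1) * (((‖e‖ : ℝ) : ℂ))^2 + 4*(x:ℂ)^2 + 12*(x:ℂ)) * h2'
  have := Complex.mul_conj (2 * (starRingEnd ℂ β) * e - 1)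
  rw [main] at this
  have hn : Complex.normSq (2 * (starRingEnd ℂ β) * e - 1) = (x - 3) ^ 2 / (18 * (x - 1)) := by
    exact_mod_cast this.symm
  rw [Complex.sq_norm]
  exact hn
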